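/- arXiv:2206.07610 — 2 statements merged into one kernel-verified Lean document; each statement's English description precedes it below -/
import Mathlib

section
/- Let G be a set equipped with two group structures (G,·) and (G,∘) having the same identity element. Then (G,·,∘) is a skew brace if and only if the subgroup λ·(G) of the permutation group Perm(G) is normalised by λ∘(G) (i.e., λ∘(σ) λ·(G) λ∘(σ)⁻¹ = λ·(G) for all σ ∈ G). -/
def IsSkewBrace {G : Type*} (dot circ : Group G) : Prop :=
  ∀ σ τ κ : G,
    circ.mul σ (dot.mul τ κ) =
      dot.mul (dot.mul (circ.mul σ τ) (dot.inv σ)) (circ.mul σ κ)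

def gammaFun {G : Type*} (dot circ : Group G) (σ τ : G) : G :=
  dot.mul (dot.inv σ) (circ.mul σ τ)

def IsSubgroupOf {G : Type*} (S : Group G) (H : Set G) : Prop :=
  S.one ∈ H ∧ (∀ a ∈ H, ∀ b ∈ H, S.mul a b ∈ H) ∧ (∀ a ∈ H, S.inv a ∈ H)

def IsLeftIdeal {G : Type*} (dot circ : Group G) (H : Set G) : Prop :=
  IsSubgroupOf dot H ∧ ∀ σ : G, ∀ τ ∈ H, gammaFun dot circ σ τ ∈ H

def IsStrongLeftIdeal {G : Type*} (dot circ : Group G) (H : Set G) : Prop :=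
  IsLeftIdeal dot circ H ∧
    ∀ σ : G, ∀ τ ∈ H, dot.mul (dot.mul σ τ) (dot.inv σ) ∈ H

def IsCharacteristicSubgroupOf {G : Type*} (S : Group G) (H : Set G) : Prop :=
  IsSubgroupOf S H ∧
    ∀ f : G ≃ G, (∀ a b : G, f (S.mul a b) = S.mul (f a) (f b)) → ∀ a ∈ H, f a ∈ H

def oppGroup {G : Type*} (dot : Group G) : Group G :=
  letI := dot
  { mul := fun a b => b * a
    one := (1 : G)
    inv := fun a => a⁻¹
    div := fun a b => b⁻¹ * a
    div_eq_mul_inv := fun _ _ => rfl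
    mul_assoc := fun a b c => (mul_assoc c b a).symm
    one_mul := fun a => mul_one a
    mul_one := fun a => one_mul a
    inv_mul_cancel := fun a => mul_inv_cancel a
    npow := @npowRec G ⟨(1 : G)⟩ ⟨fun a b => b * a⟩
    npow_zero := fun _ => rfl
    npow_succ := fun _ _ => rfl
    zpow := @zpowRec G ⟨(1 : G)⟩ ⟨fun a b => b * a⟩ ⟨fun a => a⁻¹⟩
      (@npowRec G ⟨(1 : G)⟩ ⟨fun a b => b * a⟩)
    zpow_zero' := fun _ => rfl
    zpow_succ' := fun _ _ => rfl
    zpow_neg' := fun _ _ => rfl }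

def lam {G : Type*} (S : Group G) (σ : G) : Equiv.Perm G :=
  letI := S; Equiv.mulLeft σ

def rho {G : Type*} (S : Group G) (σ : G) : Equiv.Perm G :=
  letI := S; Equiv.mulRight σ⁻¹


section Helpers
variable {G : Type*}

private lemma gassoc (S : Group G) (a b c : G) :
    S.mul (S.mul a b) c = S.mul a (S.mul b c) := S.mul_assoc a b c

private lemma gmul_one (S : Group G) (a : G) : S.mul a S.one = a := by
  letI := S; exact mul_one a

private lemma ginv_mul_cancel (S : Group G) (a : G) : S.mul (S.inv a) a = S.one := by
  letI := S; exact inv_mul_cancel a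

private lemma ginv_mul_cancel_left (S : Group G) (a b : G) :
    S.mul (S.inv a) (S.mul a b) = b := by
  letI := S; exact inv_mul_cancel_left a b

private lemma gmul_inv_cancel_left (S : Group G) (a b : G) :
    S.mul a (S.mul (S.inv a) b) = b := by
  letI := S; exact mul_inv_cancel_left a b

private lemma gmul_inv_cancel_right (S : Group G) (a b : G) :
    S.mul (S.mul a b) (S.inv b) = a := by
  letI := S; exact mul_inv_cancel_right a b

private lemma conj_apply (circ : Group G) (σ : G) (π : Equiv.Perm G) (κ : G) :
    (lam circ σ * π * (lam circ σ)⁻¹) κ = circ.mul σ (π (circ.mul (circ.inv σ) κ)) := rfl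

end Helpers

/-- For two group structures on `G` with the same identity,
`(G,·,∘)` is a skew brace iff `λ·(G)` is normalised by `λ∘(G)` in `Perm G`. -/
theorem stmt0 {G : Type*} (dot circ : Group G) (hone : dot.one = circ.one) :
    IsSkewBrace dot circ ↔
      ∀ σ : G,
        (fun π : Equiv.Perm G => lam circ σ * π * (lam circ σ)⁻¹) '' Set.range (lam dot)
          = Set.range (lam dot) := by
  constructor
  · intro h σ
    ext π
    simp only [Set.mem_image, Set.mem_range]
    constructor
    · rintro ⟨_, ⟨τ, rfl⟩, rfl⟩
      refine ⟨dot.mul (circ.mul σ τ) (dot.inv σ), Equiv.ext fun κ => ?_⟩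
      show dot.mul (dot.mul (circ.mul σ τ) (dot.inv σ)) κ
          = circ.mul σ (dot.mul τ (circ.mul (circ.inv σ) κ))
      rw [h σ τ (circ.mul (circ.inv σ) κ), gmul_inv_cancel_left circ σ κ]
    · rintro ⟨ρ, rfl⟩
      refine ⟨lam dot (circ.mul (circ.inv σ) (dot.mul ρ σ)), ⟨_, rfl⟩, Equiv.ext fun κ => ?_⟩
      show circ.mul σ (dot.mul (circ.mul (circ.inv σ) (dot.mul ρ σ)) (circ.mul (circ.inv σ) κ))
          = dot.mul ρ κ
      rw [h σ _ (circ.mul (circ.inv σ) κ), gmul_inv_cancel_left circ σ κ,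
        gmul_inv_cancel_left circ σ (dot.mul ρ σ), gmul_inv_cancel_right dot ρ σ]
  · intro h σ τ κ
    have hm : (lam circ σ * lam dot τ * (lam circ σ)⁻¹) ∈ Set.range (lam dot) := by
      rw [← h σ]; exact ⟨lam dot τ, ⟨τ, rfl⟩, rfl⟩
    obtain ⟨ρ, hρ⟩ := hm
    have key : ∀ x, dot.mul ρ x = circ.mul σ (dot.mul τ (circ.mul (circ.inv σ) x)) :=
      fun x => Equiv.ext_iff.mp hρ x
    have hρσ : circ.mul σ τ = dot.mul ρ σ := by
      have h1 := key σ
      rw [ginv_mul_cancel circ σ, ← hone, gmul_one dot τ] at h1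
      exact h1.symm
    rw [hρσ, gmul_inv_cancel_right dot ρ σ, key (circ.mul σ κ),
      ginv_mul_cancel_left circ σ κ]
end

section
/- Let (G,·,∘) be a skew brace with gamma function γ, and define the opposite operation σ ·op τ = τ·σ. Then (G,·op,∘) is a skew brace, and its gamma function γ' is given by γ'(σ) = ι·(σ)∘γ(σ), that is, γ'(σ)(τ) = σ·(γ(σ)(τ))·σ⁻¹ for all σ, τ ∈ G. -/
/-- If `(G,·,∘)` is a skew brace, then so is `(G,·op,∘)`, and its gamma
function is `γ'(σ)(τ) = σ·(γ(σ)(τ))·σ⁻¹`. -/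
theorem stmt5 {G : Type*} (dot circ : Group G) (h : IsSkewBrace dot circ) :
    IsSkewBrace (oppGroup dot) circ ∧
      ∀ σ τ : G, gammaFun (oppGroup dot) circ σ τ =
        dot.mul (dot.mul σ (gammaFun dot circ σ τ)) (dot.inv σ) := by
  letI := dot
  constructor
  · intro σ τ κ
    show circ.mul σ (κ * τ) = circ.mul σ κ * (σ⁻¹ * circ.mul σ τ)
    have key : circ.mul σ (κ * τ) = circ.mul σ κ * σ⁻¹ * circ.mul σ τ := h σ κ τ
    rw [key, mul_assoc]
  · intro σ τ
    show circ.mul σ τ * σ⁻¹ = σ * (σ⁻¹ * circ.mul σ τ) * σ⁻¹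
    group
end
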